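/- If there are no alternating loops in the single-component amalgamation Φ+Ψ, then Φ+Ψ provides g-dinaturality (i.e., P(Φ,Ψ) holds). -/

import Mathlib

open CategoryTheory

universe u v

namespace GDin

/-! ### Graphs in the sense of the paper -/

/-- Vertices of a graph with `m` left-hand argument places, `n` right-hand argument
places and `g` auxiliary `G`-vertices. -/
abbrev Vtx (m n g : ℕ) := (Fin m ⊕ Fin n) ⊕ Fin g

/-- The "same component" relation generated by a set of edges. -/
def Conn {V : Type*} (E : V → V → Prop) : V → V → Prop := Relation.EqvGen E

/-- A graph in the sense of the paper.  The sign (variance) functions `sL` (for the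
left-hand argument places `x₁,…,x_m`) and `sR` (for the right-hand argument places
`y₁,…,y_n`) are parameters; `true` means positive (covariant), `false` negative.
The structure also carries the number `k` of connected components together with the
component classifier `π`. -/
structure GGraph (m n g : ℕ) (sL : Fin m → Bool) (sR : Fin n → Bool) : Type where
  edge : Vtx m n g → Vtx m n g → Prop
  symm : ∀ u v, edge u v → edge v u
  /-- condition 1: every vertex belongs to some edge -/
  covered : ∀ v, ∃ w, edge v w
  /-- condition 2: an edge joins two left-hand argument places iff they have opposite
  signs and lie in the same component -/
  condX : ∀ i j : Fin m, edge (.inl (.inl i)) (.inl (.inl j)) ↔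
    (sL i = !sL j ∧ Conn edge (.inl (.inl i)) (.inl (.inl j)))
  /-- condition 3 -/
  condY : ∀ i j : Fin n, edge (.inl (.inr i)) (.inl (.inr j)) ↔
    (sR i = !sR j ∧ Conn edge (.inl (.inr i)) (.inl (.inr j)))
  /-- condition 4 -/
  condXY : ∀ (i : Fin m) (j : Fin n), edge (.inl (.inl i)) (.inl (.inr j)) ↔
    (sL i = sR j ∧ Conn edge (.inl (.inl i)) (.inl (.inr j)))
  /-- condition 5, first half: if a component contains an edge between two argument
  places then it contains no `G`-vertex -/
  condG₁ : ∀ v : Vtx m n g,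
    (∃ u w : Fin m ⊕ Fin n, Conn edge (.inl u) v ∧ edge (.inl u) (.inl w)) →
      ∀ a : Fin g, ¬ Conn edge (.inr a) v
  /-- condition 5, second half: otherwise the component contains exactly one
  `G`-vertex -/
  condG₂ : ∀ v : Vtx m n g,
    (¬ ∃ u w : Fin m ⊕ Fin n, Conn edge (.inl u) v ∧ edge (.inl u) (.inl w)) →
      ∃! a : Fin g, Conn edge (.inr a) v
  /-- condition 5: every other vertex of such a component is joined to the
  `G`-vertex by an edge -/
  condG₃ : ∀ (a : Fin g) (u : Fin m ⊕ Fin n),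
    Conn edge (.inl u) (.inr a) → edge (.inl u) (.inr a)
  /-- the number of components -/
  k : ℕ
  /-- the component classifier -/
  π : Vtx m n g → Fin k
  π_surj : Function.Surjective π
  π_eq : ∀ u v, π u = π v ↔ Conn edge u v

namespace GGraph

variable {m n g : ℕ} {sL : Fin m → Bool} {sR : Fin n → Bool}

/-- component of the `i`-th left-hand argument place -/
def πL (Γ : GGraph m n g sL sR) (i : Fin m) : Fin Γ.k := Γ.π (.inl (.inl i))

/-- component of the `j`-th right-hand argument place -/
def πR (Γ : GGraph m n g sL sR) (j : Fin n) : Fin Γ.k := Γ.π (.inl (.inr j))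

end GGraph

/-! ### Variance-indexed categories and g-dinaturality -/

/-- `B` or `Bᵒᵖ` according to a variance. -/
def VarCat (B : Type u) [Category.{v} B] : Bool → Type u
  | true => B
  | false => Bᵒᵖ

instance (B : Type u) [Category.{v} B] : ∀ b, Category.{v} (VarCat B b)
  | true => (inferInstance : Category B)
  | false => (inferInstance : Category Bᵒᵖ)

variable {B : Type u} [Category.{v} B]

/-- The object of `B` or `Bᵒᵖ` with `P` at a positive argument place and `N` at a
negative one. -/
def pairObj : (b : Bool) → B → B → VarCat B b
  | true, P, _ => P
  | false, _, N => Opposite.op N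

/-- The morphism with `u` at a positive argument place and `v` (contravariantly) at a
negative one. -/
def pairHom : (b : Bool) → {P P' N N' : B} → (P ⟶ P') → (N' ⟶ N) →
    (pairObj b P N ⟶ pairObj b P' N')
  | true, _, _, _, _, u, _ => u
  | false, _, _, _, _, _, v => v.op

variable {ι : Type} {k : ℕ}

/-- The tuple of objects `⟨u,v⟩` with `u` in all positive and `v` in all negative
argument places. -/
@[reducible] def tupObj (s : ι → Bool) (P N : B) : ∀ i, VarCat B (s i) :=
  fun i => pairObj (s i) P N

/-- The corresponding tuple of morphisms. -/
def tupHom (s : ι → Bool) {P P' N N' : B} (u : P ⟶ P') (v : N' ⟶ N) :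
    (tupObj s P N ⟶ tupObj s P' N') :=
  fun i => pairHom (s i) u v

/-- The diagonal-like tuple of objects determined by an assignment of objects to
the components of a graph. -/
@[reducible] def diagObj (s : ι → Bool) (pl : ι → Fin k) (A : Fin k → B) :
    ∀ i, VarCat B (s i) :=
  fun i => pairObj (s i) (A (pl i)) (A (pl i))

/-- The tuple of objects obtained from the component assignment `A` by replacing the
value of component `c` by `P` at positive and `N` at negative argument places. -/
def hexObj (s : ι → Bool) (pl : ι → Fin k) (c : Fin k) (A : Fin k → B) (P N : B) :
    ∀ i, VarCat B (s i) :=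
  fun i => if pl i = c then pairObj (s i) P N else pairObj (s i) (A (pl i)) (A (pl i))

/-- The corresponding tuple of morphisms (identities outside component `c`). -/
def hexHom (s : ι → Bool) (pl : ι → Fin k) (c : Fin k) (A : Fin k → B)
    {P P' N N' : B} (u : P ⟶ P') (v : N' ⟶ N) :
    (hexObj s pl c A P N ⟶ hexObj s pl c A P' N') :=
  fun i => by
    unfold hexObj
    by_cases h : pl i = c
    · simp only [if_pos h]; exact pairHom (s i) u v
    · simp only [if_neg h]; exact 𝟙 _

/-- update of a component assignment -/
def updF {γ : Type*} (A : Fin k → γ) (c : Fin k) (X : γ) : Fin k → γ :=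
  fun j => if j = c then X else A j

theorem diag_upd (s : ι → Bool) (pl : ι → Fin k) (c : Fin k) (A : Fin k → B) (X : B) :
    diagObj s pl (updF A c X) = hexObj s pl c A X X := by
  funext i
  unfold diagObj hexObj updF
  by_cases h : pl i = c <;> simp [h]

/-- g-dinaturality of a transformation with respect to a graph: in every component
and for every morphism `f : P ⟶ Q` (all other components being kept fixed), the
g-dinaturality hexagon commutes. -/
def IsGDin {m n gΓ : ℕ} {sL : Fin m → Bool} {sR : Fin n → Bool}
    (Γ : GGraph m n gΓ sL sR)
    (T : (∀ i : Fin m, VarCat B (sL i)) ⥤ B)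
    (S : (∀ j : Fin n, VarCat B (sR j)) ⥤ B)
    (α : ∀ A : Fin Γ.k → B, T.obj (diagObj sL Γ.πL A) ⟶ S.obj (diagObj sR Γ.πR A)) :
    Prop :=
  ∀ (c : Fin Γ.k) (A : Fin Γ.k → B) (P Q : B) (f : P ⟶ Q),
    T.map (hexHom sL Γ.πL c A f (𝟙 Q)) ≫
      eqToHom (congrArg T.obj (diag_upd sL Γ.πL c A Q).symm) ≫
      α (updF A c Q) ≫
      eqToHom (congrArg S.obj (diag_upd sR Γ.πR c A Q)) ≫
      S.map (hexHom sR Γ.πR c A (𝟙 Q) f)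
    = T.map (hexHom sL Γ.πL c A (𝟙 P) f) ≫
      eqToHom (congrArg T.obj (diag_upd sL Γ.πL c A P).symm) ≫
      α (updF A c P) ≫
      eqToHom (congrArg S.obj (diag_upd sR Γ.πR c A P)) ≫
      S.map (hexHom sR Γ.πR c A f (𝟙 P))

/-- The g-dinaturality hexagon for a transformation whose graph has a single
component (so that only the signs of the argument places matter). -/
def SingleHex {ιx ιz : Type} (sx : ιx → Bool) (sz : ιz → Bool)
    (F : (∀ i : ιx, VarCat B (sx i)) ⥤ B) (H : (∀ l : ιz, VarCat B (sz l)) ⥤ B)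
    (φ : ∀ A : B, F.obj (tupObj sx A A) ⟶ H.obj (tupObj sz A A)) : Prop :=
  ∀ (P Q : B) (f : P ⟶ Q),
    F.map (tupHom sx f (𝟙 Q)) ≫ φ Q ≫ H.map (tupHom sz (𝟙 Q) f)
    = F.map (tupHom sx (𝟙 P) f) ≫ φ P ≫ H.map (tupHom sz f (𝟙 P))

section Amalg

variable {m n p gΦ gΨ : ℕ} {sx : Fin m → Bool} {sy : Fin n → Bool} {sz : Fin p → Bool}

/-- Vertices of the amalgamation `Φ+Ψ` of two graphs sharing their `y` argument
places. -/
abbrev AVtx (m n p gΦ gΨ : ℕ) := (Fin m ⊕ Fin n ⊕ Fin p) ⊕ (Fin gΦ ⊕ Fin gΨ)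

/-- inclusion of the vertices of `Φ` into the amalgamation -/
def phiInc : Vtx m n gΦ → AVtx m n p gΦ gΨ
  | .inl (.inl i) => .inl (.inl i)
  | .inl (.inr j) => .inl (.inr (.inl j))
  | .inr a => .inr (.inl a)

/-- inclusion of the vertices of `Ψ` into the amalgamation -/
def psiInc : Vtx n p gΨ → AVtx m n p gΦ gΨ
  | .inl (.inl j) => .inl (.inr (.inl j))
  | .inl (.inr l) => .inl (.inr (.inr l))
  | .inr a => .inr (.inr a)

/-- The edges of the amalgamation `Φ+Ψ`, tagged (`true` for `Φ`-edges, `false` for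
`Ψ`-edges); the edge sets are kept disjoint via the tag. -/
def amEdge (Φ : GGraph m n gΦ sx sy) (Ψ : GGraph n p gΨ sy sz) :
    Bool → AVtx m n p gΦ gΨ → AVtx m n p gΦ gΨ → Prop
  | true, u, v => ∃ u' v', Φ.edge u' v' ∧ phiInc u' = u ∧ phiInc v' = v
  | false, u, v => ∃ u' v', Ψ.edge u' v' ∧ psiInc u' = u ∧ psiInc v' = v

/-- `Φ+Ψ` has a single (connected) component. -/
def AmalgConnected (Φ : GGraph m n gΦ sx sy) (Ψ : GGraph n p gΨ sy sz) : Prop :=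
  ∀ u v : AVtx m n p gΦ gΨ,
    Conn (fun a b => amEdge Φ Ψ true a b ∨ amEdge Φ Ψ false a b) u v

/-- There is an alternating loop in `Φ+Ψ`: a closed alternating chain, i.e. a cyclic
sequence of vertices joined by edges of `Φ+Ψ` such that of any two adjacent edges one
belongs to `E_Φ` and the other to `E_Ψ`. -/
def HasAltLoop (Φ : GGraph m n gΦ sx sy) (Ψ : GGraph n p gΨ sy sz) : Prop :=
  ∃ (q : ℕ) (vs : ℕ → AVtx m n p gΦ gΨ) (sd : ℕ → Bool),
    0 < q ∧ vs 0 = vs q ∧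
    (∀ t, t < q → amEdge Φ Ψ (sd t) (vs t) (vs (t + 1))) ∧
    (∀ t, t + 1 < q → sd t ≠ sd (t + 1))

/-- `Φ+Ψ` provides g-dinaturality: for every category, all functors of the types
prescribed by the signs of the argument places and all g-dinatural `γ`, `δ` with
graphs `Φ`, `Ψ`, the composite family is g-dinatural with the (single-component)
composite graph `ΨΦ`, i.e. the composite hexagon commutes.  (For a
single-component graph, g-dinaturality depends only on the signs of the argument
places.) -/
def Provides (Φ : GGraph m n gΦ sx sy) (Ψ : GGraph n p gΨ sy sz) : Prop :=
  ∀ {B : Type u} [Category.{v} B]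
    (F : (∀ i : Fin m, VarCat B (sx i)) ⥤ B)
    (G : (∀ j : Fin n, VarCat B (sy j)) ⥤ B)
    (H : (∀ l : Fin p, VarCat B (sz l)) ⥤ B)
    (γ : ∀ A : Fin Φ.k → B, F.obj (diagObj sx Φ.πL A) ⟶ G.obj (diagObj sy Φ.πR A))
    (δ : ∀ A : Fin Ψ.k → B, G.obj (diagObj sy Ψ.πL A) ⟶ H.obj (diagObj sz Ψ.πR A)),
    IsGDin Φ F G γ → IsGDin Ψ G H δ →
    SingleHex sx sz F H (fun A => γ (fun _ => A) ≫ δ (fun _ => A))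

end Amalg

section PartA
variable {B : Type u} [Category.{v} B] {ι : Type} {k : ℕ}

theorem hexHom_heq_pos (s : ι → Bool) (pl : ι → Fin k) (c : Fin k) (A : Fin k → B)
    {P P' N N' : B} (u : P ⟶ P') (v : N' ⟶ N) (i : ι) (h : pl i = c) :
    HEq (hexHom s pl c A u v i) (pairHom (s i) u v) := by
  unfold hexHom
  rw [dif_pos h]
  simp only [eq_mpr_eq_cast]
  exact cast_heq _ _

theorem hexHom_heq_neg (s : ι → Bool) (pl : ι → Fin k) (c : Fin k) (A : Fin k → B)
    {P P' N N' : B} (u : P ⟶ P') (v : N' ⟶ N) (i : ι) (h : ¬ pl i = c) :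
    HEq (hexHom s pl c A u v i) (𝟙 (pairObj (s i) (A (pl i)) (A (pl i)))) := by
  unfold hexHom
  rw [dif_neg h]
  simp only [eq_mpr_eq_cast]
  exact HEq.trans (cast_heq _ _) (by congr 1 <;> simp [hexObj, if_neg h])

theorem hexObj_pos (s : ι → Bool) (pl : ι → Fin k) (c : Fin k) (A : Fin k → B)
    (P N : B) (i : ι) (h : pl i = c) :
    hexObj s pl c A P N i = pairObj (s i) P N := by simp [hexObj, h]

theorem hexObj_neg (s : ι → Bool) (pl : ι → Fin k) (c : Fin k) (A : Fin k → B)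
    (P N : B) (i : ι) (h : ¬ pl i = c) :
    hexObj s pl c A P N i = pairObj (s i) (A (pl i)) (A (pl i)) := by simp [hexObj, h]

theorem hexHom_pos_eq (s : ι → Bool) (pl : ι → Fin k) (c : Fin k) (A : Fin k → B)
    {P P' N N' : B} (u : P ⟶ P') (v : N' ⟶ N) (i : ι) (h : pl i = c) :
    hexHom s pl c A u v i =
      eqToHom (hexObj_pos s pl c A P N i h) ≫ pairHom (s i) u v ≫
        eqToHom (hexObj_pos s pl c A P' N' i h).symm := by
  exact (conj_eqToHom_iff_heq' _ _ (hexObj_pos s pl c A P N i h)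
    (hexObj_pos s pl c A P' N' i h).symm).2 (hexHom_heq_pos s pl c A u v i h)

theorem hexHom_neg_eq (s : ι → Bool) (pl : ι → Fin k) (c : Fin k) (A : Fin k → B)
    {P P' N N' : B} (u : P ⟶ P') (v : N' ⟶ N) (i : ι) (h : ¬ pl i = c) :
    hexHom s pl c A u v i =
      eqToHom ((hexObj_neg s pl c A P N i h).trans (hexObj_neg s pl c A P' N' i h).symm) := by
  have := (conj_eqToHom_iff_heq' (hexHom s pl c A u v i)
    (𝟙 (pairObj (s i) (A (pl i)) (A (pl i))))
    (hexObj_neg s pl c A P N i h) (hexObj_neg s pl c A P' N' i h).symm).2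
    (hexHom_heq_neg s pl c A u v i h)
  rw [this]
  simp [eqToHom_trans]

end PartA

section PartB
variable {B : Type u} [Category.{v} B]
variable (P Q : B)

/-- value of a state bit: `true` = still `Q`, `false` = already `P`. -/
@[reducible] def val : Bool → B
  | true => Q
  | false => P

variable (f : P ⟶ Q)

def inP : (b : Bool) → (P ⟶ val P Q b)
  | true => f
  | false => 𝟙 P

def outQ : (b : Bool) → (val P Q b ⟶ Q)
  | true => 𝟙 Q
  | false => f

def mid : (b₁ b₂ : Bool) → (b₁ = true → b₂ = true) → (val P Q b₁ ⟶ val P Q b₂)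
  | false, false, _ => 𝟙 P
  | false, true, _ => f
  | true, true, _ => 𝟙 Q
  | true, false, h => absurd (h rfl) (by simp)

def midHom : (s b₁ b₂ : Bool) → ((cond s b₁ b₂) = true → (cond s b₂ b₁) = true) →
    (pairObj s (val P Q b₁) (val P Q b₁) ⟶ pairObj s (val P Q b₂) (val P Q b₂))
  | true, _, _, h => mid P Q f _ _ h
  | false, _, _, h => (mid P Q f _ _ h).op

def leftHom (s b : Bool) : (pairObj s P Q ⟶ pairObj s (val P Q b) (val P Q b)) :=
  pairHom s (inP P Q f b) (outQ P Q f b)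

def rightHom (s b : Bool) : (pairObj s (val P Q b) (val P Q b) ⟶ pairObj s Q P) :=
  pairHom s (outQ P Q f b) (inP P Q f b)

theorem midHom_congr (s : Bool) {b₁ b₁' b₂ b₂' : Bool} (h₁ : b₁ = b₁') (h₂ : b₂ = b₂')
    (pr : (cond s b₁ b₂) = true → (cond s b₂ b₁) = true)
    (pr' : (cond s b₁' b₂') = true → (cond s b₂' b₁') = true) :
    HEq (midHom P Q f s b₁ b₂ pr) (midHom P Q f s b₁' b₂' pr') := by
  subst h₁; subst h₂; rfl

theorem leftHom_true (s : Bool) : leftHom P Q f s true = pairHom s f (𝟙 Q) := rfl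
theorem leftHom_false (s : Bool) : leftHom P Q f s false = pairHom s (𝟙 P) f := rfl
theorem rightHom_true (s : Bool) : rightHom P Q f s true = pairHom s (𝟙 Q) f := rfl
theorem rightHom_false (s : Bool) : rightHom P Q f s false = pairHom s f (𝟙 P) := rfl

theorem midHom_tt (s : Bool) (pr) : midHom P Q f s true true pr = pairHom s (𝟙 Q) (𝟙 Q) := by
  cases s <;> rfl
theorem midHom_ff (s : Bool) (pr) : midHom P Q f s false false pr = pairHom s (𝟙 P) (𝟙 P) := by
  cases s <;> rfl
theorem midHom_c3 (s : Bool) (pr) : HEq (midHom P Q f s true s pr) (pairHom s (𝟙 Q) f) := by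
  cases s <;> rfl
theorem midHom_c4 (s : Bool) (pr) : HEq (midHom P Q f s false s pr) (pairHom s f (𝟙 P)) := by
  cases s <;> rfl
theorem midHom_c3' (s : Bool) (pr) : HEq (midHom P Q f s (!s) true pr) (pairHom s f (𝟙 Q)) := by
  cases s <;> rfl
theorem midHom_c4' (s : Bool) (pr) : HEq (midHom P Q f s (!s) false pr) (pairHom s (𝟙 P) f) := by
  cases s <;> rfl

theorem pairHom_id (s : Bool) (X Y : B) : pairHom s (𝟙 X) (𝟙 Y) = 𝟙 (pairObj s X Y) := by
  cases s <;> rfl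

end PartB

section PartC
variable {m n p gΦ gΨ : ℕ} {sx : Fin m → Bool} {sy : Fin n → Bool} {sz : Fin p → Bool}
variable (Φ : GGraph m n gΦ sx sy) (Ψ : GGraph n p gΨ sy sz)
variable {B : Type u} [Category.{v} B]
variable (P Q : B) (f : P ⟶ Q)

/-- state assignment for the Φ-components -/
@[reducible] def AF (σ : Fin Φ.k ⊕ Fin Ψ.k → Bool) : Fin Φ.k → B := fun c => val P Q (σ (.inl c))

/-- state assignment for the Ψ-components -/
@[reducible] def AG (σ : Fin Φ.k ⊕ Fin Ψ.k → Bool) : Fin Ψ.k → B := fun d => val P Q (σ (.inr d))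

/-- compatibility of a state -/
def Compat (σ : Fin Φ.k ⊕ Fin Ψ.k → Bool) : Prop :=
  ∀ j : Fin n, (cond (sy j) (σ (.inl (Φ.πR j))) (σ (.inr (Ψ.πL j)))) = true →
    (cond (sy j) (σ (.inr (Ψ.πL j))) (σ (.inl (Φ.πR j)))) = true

def uFm (σ : Fin Φ.k ⊕ Fin Ψ.k → Bool) :
    (tupObj sx P Q ⟶ diagObj sx Φ.πL (AF Φ Ψ P Q σ)) :=
  fun i => leftHom P Q f (sx i) (σ (.inl (Φ.πL i)))

def wMid (σ : Fin Φ.k ⊕ Fin Ψ.k → Bool) (hσ : Compat Φ Ψ σ) :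
    (diagObj sy Φ.πR (AF Φ Ψ P Q σ) ⟶ diagObj sy Ψ.πL (AG Φ Ψ P Q σ)) :=
  fun j => midHom P Q f (sy j) (σ (.inl (Φ.πR j))) (σ (.inr (Ψ.πL j))) (hσ j)

def vHm (σ : Fin Φ.k ⊕ Fin Ψ.k → Bool) :
    (diagObj sz Ψ.πR (AG Φ Ψ P Q σ) ⟶ tupObj sz Q P) :=
  fun l => rightHom P Q f (sz l) (σ (.inr (Ψ.πR l)))

variable (F : (∀ i : Fin m, VarCat B (sx i)) ⥤ B)
  (G : (∀ j : Fin n, VarCat B (sy j)) ⥤ B)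
  (H : (∀ l : Fin p, VarCat B (sz l)) ⥤ B)
  (γ : ∀ A : Fin Φ.k → B, F.obj (diagObj sx Φ.πL A) ⟶ G.obj (diagObj sy Φ.πR A))
  (δ : ∀ A : Fin Ψ.k → B, G.obj (diagObj sy Ψ.πL A) ⟶ H.obj (diagObj sz Ψ.πR A))

def Theta (σ : Fin Φ.k ⊕ Fin Ψ.k → Bool) (hσ : Compat Φ Ψ σ) :
    F.obj (tupObj sx P Q) ⟶ H.obj (tupObj sz Q P) :=
  F.map (uFm Φ Ψ P Q f σ) ≫ γ (AF Φ Ψ P Q σ) ≫ G.map (wMid Φ Ψ P Q f σ hσ) ≫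
    δ (AG Φ Ψ P Q σ) ≫ H.map (vHm Φ Ψ P Q f σ)

theorem theta_congr {σ σ' : Fin Φ.k ⊕ Fin Ψ.k → Bool} (h : σ = σ')
    (hσ : Compat Φ Ψ σ) (hσ' : Compat Φ Ψ σ') :
    Theta Φ Ψ P Q f F G H γ δ σ hσ = Theta Φ Ψ P Q f F G H γ δ σ' hσ' := by
  subst h; rfl

theorem compat_const (b : Bool) : Compat Φ Ψ (fun _ => b) := by
  intro j; cases sy j <;> simp

theorem theta_top :
    Theta Φ Ψ P Q f F G H γ δ (fun _ => true) (compat_const Φ Ψ true) =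
      F.map (tupHom sx f (𝟙 Q)) ≫ (γ (fun _ => Q) ≫ δ (fun _ => Q)) ≫
        H.map (tupHom sz (𝟙 Q) f) := by
  have hw : wMid Φ Ψ P Q f (fun _ => true) (compat_const Φ Ψ true) = 𝟙 _ := by
    funext j
    show midHom P Q f (sy j) true true _ = _
    rw [midHom_tt, pairHom_id]
    rfl
  have hw2 : G.map (wMid Φ Ψ P Q f (fun _ => true) (compat_const Φ Ψ true)) = 𝟙 _ :=
    (congrArg G.map hw).trans (G.map_id _)
  show F.map _ ≫ γ (fun _ => Q) ≫ G.map _ ≫ δ (fun _ => Q) ≫ H.map _ = _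
  rw [hw2, Category.id_comp]
  simp only [Category.assoc]
  rfl

theorem theta_bot :
    Theta Φ Ψ P Q f F G H γ δ (fun _ => false) (compat_const Φ Ψ false) =
      F.map (tupHom sx (𝟙 P) f) ≫ (γ (fun _ => P) ≫ δ (fun _ => P)) ≫
        H.map (tupHom sz f (𝟙 P)) := by
  have hw : wMid Φ Ψ P Q f (fun _ => false) (compat_const Φ Ψ false) = 𝟙 _ := by
    funext j
    show midHom P Q f (sy j) false false _ = _
    rw [midHom_ff, pairHom_id]
    rfl
  have hw2 : G.map (wMid Φ Ψ P Q f (fun _ => false) (compat_const Φ Ψ false)) = 𝟙 _ :=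
    (congrArg G.map hw).trans (G.map_id _)
  show F.map _ ≫ γ (fun _ => P) ≫ G.map _ ≫ δ (fun _ => P) ≫ H.map _ = _
  rw [hw2, Category.id_comp]
  simp only [Category.assoc]
  rfl

end PartC

section PartD
variable {m n p gΦ gΨ : ℕ} {sx : Fin m → Bool} {sy : Fin n → Bool} {sz : Fin p → Bool}
variable (Φ : GGraph m n gΦ sx sy) (Ψ : GGraph n p gΨ sy sz)
variable {B : Type u} [Category.{v} B]
variable (P Q : B) (f : P ⟶ Q)

theorem hex_diag {ι : Type} {k : ℕ} (s : ι → Bool) (pl : ι → Fin k) (c : Fin k)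
    (A : Fin k → B) (X : B) (hA : A c = X) : hexObj s pl c A X X = diagObj s pl A := by
  funext i
  by_cases h : pl i = c <;> simp [hexObj, diagObj, h, hA]

theorem updF_self {k : ℕ} (A : Fin k → B) (c : Fin k) (X : B) (h : A c = X) :
    updF A c X = A := by
  funext c'
  by_cases hh : c' = c <;> simp [updF, hh, h]

/-- component-wise morphism from the `⟨P,Q⟩`-tuple into the Φ-hexagon object -/
def uF2 (σ : Fin Φ.k ⊕ Fin Ψ.k → Bool) (c : Fin Φ.k) :
    (tupObj sx P Q ⟶ hexObj sx Φ.πL c (AF Φ Ψ P Q σ) P Q) :=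
  fun i =>
    if h : Φ.πL i = c then eqToHom (hexObj_pos sx Φ.πL c (AF Φ Ψ P Q σ) P Q i h).symm
    else leftHom P Q f (sx i) (σ (.inl (Φ.πL i))) ≫
      eqToHom (hexObj_neg sx Φ.πL c (AF Φ Ψ P Q σ) P Q i h).symm

/-- component-wise morphism from the Φ-hexagon object to the Ψ-diagonal -/
def w2m (σ : Fin Φ.k ⊕ Fin Ψ.k → Bool) (c : Fin Φ.k) (hσ : Compat Φ Ψ σ)
    (hb : ∀ j, Φ.πR j = c → σ (.inr (Ψ.πL j)) = sy j) :
    (hexObj sy Φ.πR c (AF Φ Ψ P Q σ) Q P ⟶ diagObj sy Ψ.πL (AG Φ Ψ P Q σ)) :=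
  fun j =>
    if h : Φ.πR j = c then
      eqToHom (by rw [hexObj_pos sy Φ.πR c (AF Φ Ψ P Q σ) Q P j h]
                  show pairObj (sy j) Q P =
                    pairObj (sy j) (val P Q (σ (.inr (Ψ.πL j)))) (val P Q (σ (.inr (Ψ.πL j))))
                  rw [hb j h]; cases sy j <;> rfl)
    else eqToHom (hexObj_neg sy Φ.πR c (AF Φ Ψ P Q σ) Q P j h) ≫
      midHom P Q f (sy j) (σ (.inl (Φ.πR j))) (σ (.inr (Ψ.πL j))) (hσ j)

end PartD

section PartE
variable {m n p gΦ gΨ : ℕ} {sx : Fin m → Bool} {sy : Fin n → Bool} {sz : Fin p → Bool}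
variable (Φ : GGraph m n gΦ sx sy) (Ψ : GGraph n p gΨ sy sz)
variable {B : Type u} [Category.{v} B]
variable (P Q : B) (f : P ⟶ Q)

theorem fact1 (σ : Fin Φ.k ⊕ Fin Ψ.k → Bool) (c : Fin Φ.k) (hc : σ (.inl c) = true) :
    uFm Φ Ψ P Q f σ = uF2 Φ Ψ P Q f σ c ≫ hexHom sx Φ.πL c (AF Φ Ψ P Q σ) f (𝟙 Q) ≫
      eqToHom (hex_diag sx Φ.πL c (AF Φ Ψ P Q σ) Q (by show val P Q _ = Q; rw [hc])) := by
  funext i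
  simp only [Pi.comp_apply, Functor.eqToHom_proj, uFm, uF2]
  by_cases h : Φ.πL i = c
  · rw [dif_pos h, hexHom_pos_eq sx Φ.πL c (AF Φ Ψ P Q σ) f (𝟙 Q) i h]
    refine eq_of_heq ?_
    simp only [Category.assoc, Functor.eqToHom_proj, eqToHom_comp_heq_iff, comp_eqToHom_heq_iff,
      heq_eqToHom_comp_iff, heq_comp_eqToHom_iff, eqToHom_trans, eqToHom_refl,
      Category.comp_id, Category.id_comp]
    rw [show σ (.inl (Φ.πL i)) = true by rw [h, hc]]
    exact heq_of_eq (leftHom_true P Q f (sx i))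
  · rw [dif_neg h, hexHom_neg_eq sx Φ.πL c (AF Φ Ψ P Q σ) f (𝟙 Q) i h]
    refine eq_of_heq ?_
    simp only [Category.assoc, Functor.eqToHom_proj, eqToHom_comp_heq_iff, comp_eqToHom_heq_iff,
      heq_eqToHom_comp_iff, heq_comp_eqToHom_iff, eqToHom_trans, eqToHom_refl,
      Category.comp_id, Category.id_comp]
    exact HEq.rfl

end PartE

section PartF
variable {m n p gΦ gΨ : ℕ} {sx : Fin m → Bool} {sy : Fin n → Bool} {sz : Fin p → Bool}
variable (Φ : GGraph m n gΦ sx sy) (Ψ : GGraph n p gΨ sy sz)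
variable {B : Type u} [Category.{v} B]
variable (P Q : B) (f : P ⟶ Q)

theorem hexPP_diag {ι : Type} {k : ℕ} (s : ι → Bool) (pl : ι → Fin k)
    (g g' : Fin k → Bool) (c : Fin k) (hc' : g' c = false)
    (hg : ∀ x, x ≠ c → g' x = g x) :
    hexObj s pl c (fun x => val P Q (g x)) P P = diagObj s pl (fun x => val P Q (g' x)) := by
  funext i
  by_cases h : pl i = c
  · simp [hexObj, diagObj, h, hc']
  · simp [hexObj, diagObj, h, hg (pl i) h]

theorem fact2 (σ σ' : Fin Φ.k ⊕ Fin Ψ.k → Bool) (c : Fin Φ.k)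
    (hc' : σ' (.inl c) = false) (hrest : ∀ u, u ≠ .inl c → σ' u = σ u) :
    uFm Φ Ψ P Q f σ' = uF2 Φ Ψ P Q f σ c ≫ hexHom sx Φ.πL c (AF Φ Ψ P Q σ) (𝟙 P) f ≫
      eqToHom (hexPP_diag P Q sx Φ.πL (fun x => σ (.inl x)) (fun x => σ' (.inl x)) c hc'
        (fun x hx => hrest _ (by simp [hx]))) := by
  funext i
  simp only [Pi.comp_apply, Functor.eqToHom_proj, uFm, uF2]
  by_cases h : Φ.πL i = c
  · rw [dif_pos h, hexHom_pos_eq sx Φ.πL c (AF Φ Ψ P Q σ) (𝟙 P) f i h]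
    refine eq_of_heq ?_
    simp only [Category.assoc, Functor.eqToHom_proj, eqToHom_comp_heq_iff, comp_eqToHom_heq_iff,
      heq_eqToHom_comp_iff, heq_comp_eqToHom_iff, eqToHom_trans, eqToHom_refl,
      Category.comp_id, Category.id_comp]
    rw [show σ' (.inl (Φ.πL i)) = false by rw [h, hc']]
    exact heq_of_eq (leftHom_false P Q f (sx i))
  · rw [dif_neg h, hexHom_neg_eq sx Φ.πL c (AF Φ Ψ P Q σ) (𝟙 P) f i h]
    refine eq_of_heq ?_
    simp only [Category.assoc, Functor.eqToHom_proj, eqToHom_comp_heq_iff, comp_eqToHom_heq_iff,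
      heq_eqToHom_comp_iff, heq_comp_eqToHom_iff, eqToHom_trans, eqToHom_refl,
      Category.comp_id, Category.id_comp]
    rw [hrest (.inl (Φ.πL i)) (by simp [h])]

theorem fact3 (σ : Fin Φ.k ⊕ Fin Ψ.k → Bool) (c : Fin Φ.k) (hσ : Compat Φ Ψ σ)
    (hb : ∀ j, Φ.πR j = c → σ (.inr (Ψ.πL j)) = sy j) (hc : σ (.inl c) = true) :
    wMid Φ Ψ P Q f σ hσ =
      eqToHom (hex_diag sy Φ.πR c (AF Φ Ψ P Q σ) Q (by show val P Q _ = Q; rw [hc])).symm ≫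
        hexHom sy Φ.πR c (AF Φ Ψ P Q σ) (𝟙 Q) f ≫ w2m Φ Ψ P Q f σ c hσ hb := by
  funext j
  simp only [Pi.comp_apply, Functor.eqToHom_proj, wMid, w2m]
  by_cases h : Φ.πR j = c
  · rw [dif_pos h, hexHom_pos_eq sy Φ.πR c (AF Φ Ψ P Q σ) (𝟙 Q) f j h]
    refine eq_of_heq ?_
    simp only [Category.assoc, Functor.eqToHom_proj, eqToHom_comp_heq_iff, comp_eqToHom_heq_iff,
      heq_eqToHom_comp_iff, heq_comp_eqToHom_iff, eqToHom_trans, eqToHom_refl,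
      Category.comp_id, Category.id_comp]
    exact HEq.trans (midHom_congr P Q f (sy j) (show σ (.inl (Φ.πR j)) = true by rw [h, hc])
      (hb j h) (hσ j) (by cases sy j <;> simp)) (midHom_c3 P Q f (sy j) _)
  · rw [dif_neg h, hexHom_neg_eq sy Φ.πR c (AF Φ Ψ P Q σ) (𝟙 Q) f j h]
    refine eq_of_heq ?_
    simp only [Category.assoc, Functor.eqToHom_proj, eqToHom_comp_heq_iff, comp_eqToHom_heq_iff,
      heq_eqToHom_comp_iff, heq_comp_eqToHom_iff, eqToHom_trans, eqToHom_refl,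
      Category.comp_id, Category.id_comp]
    exact HEq.rfl

theorem fact4 (σ σ' : Fin Φ.k ⊕ Fin Ψ.k → Bool) (c : Fin Φ.k)
    (hσ : Compat Φ Ψ σ) (hσ' : Compat Φ Ψ σ')
    (hb : ∀ j, Φ.πR j = c → σ (.inr (Ψ.πL j)) = sy j)
    (hc' : σ' (.inl c) = false) (hrest : ∀ u, u ≠ .inl c → σ' u = σ u)
    (hAG : AG Φ Ψ P Q σ' = AG Φ Ψ P Q σ) :
    wMid Φ Ψ P Q f σ' hσ' =
      eqToHom (hexPP_diag P Q sy Φ.πR (fun x => σ (.inl x)) (fun x => σ' (.inl x)) c hc'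
        (fun x hx => hrest _ (by simp [hx]))).symm ≫
      hexHom sy Φ.πR c (AF Φ Ψ P Q σ) f (𝟙 P) ≫ w2m Φ Ψ P Q f σ c hσ hb ≫
      eqToHom (congrArg (diagObj sy Ψ.πL) hAG).symm := by
  funext j
  simp only [Pi.comp_apply, Functor.eqToHom_proj, wMid, w2m]
  by_cases h : Φ.πR j = c
  · rw [dif_pos h, hexHom_pos_eq sy Φ.πR c (AF Φ Ψ P Q σ) f (𝟙 P) j h]
    refine eq_of_heq ?_
    simp only [Category.assoc, Functor.eqToHom_proj, eqToHom_comp_heq_iff, comp_eqToHom_heq_iff,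
      heq_eqToHom_comp_iff, heq_comp_eqToHom_iff, eqToHom_trans, eqToHom_refl,
      Category.comp_id, Category.id_comp]
    exact HEq.trans (midHom_congr P Q f (sy j) (show σ' (.inl (Φ.πR j)) = false by rw [h, hc'])
      ((hrest _ (by simp)).trans (hb j h)) (hσ' j) (by cases sy j <;> simp))
      (midHom_c4 P Q f (sy j) _)
  · rw [dif_neg h, hexHom_neg_eq sy Φ.πR c (AF Φ Ψ P Q σ) f (𝟙 P) j h]
    refine eq_of_heq ?_
    simp only [Category.assoc, Functor.eqToHom_proj, eqToHom_comp_heq_iff, comp_eqToHom_heq_iff,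
      heq_eqToHom_comp_iff, heq_comp_eqToHom_iff, eqToHom_trans, eqToHom_refl,
      Category.comp_id, Category.id_comp]
    exact midHom_congr P Q f (sy j) (hrest _ (by simp [h])) (hrest _ (by simp)) (hσ' j) (hσ j)

theorem fact5 (σ σ' : Fin Φ.k ⊕ Fin Ψ.k → Bool) (c : Fin Φ.k)
    (hrest : ∀ u, u ≠ .inl c → σ' u = σ u) (hAG : AG Φ Ψ P Q σ' = AG Φ Ψ P Q σ) :
    vHm Φ Ψ P Q f σ' = eqToHom (congrArg (diagObj sz Ψ.πR) hAG) ≫ vHm Φ Ψ P Q f σ := by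
  funext l
  simp only [Pi.comp_apply, Functor.eqToHom_proj, vHm]
  refine eq_of_heq ?_
  simp only [Category.assoc, eqToHom_comp_heq_iff, comp_eqToHom_heq_iff,
    heq_eqToHom_comp_iff, heq_comp_eqToHom_iff]
  rw [hrest (.inr (Ψ.πR l)) (by simp)]

theorem gam_congr
    (F : (∀ i : Fin m, VarCat B (sx i)) ⥤ B) (G : (∀ j : Fin n, VarCat B (sy j)) ⥤ B)
    (γ : ∀ A : Fin Φ.k → B, F.obj (diagObj sx Φ.πL A) ⟶ G.obj (diagObj sy Φ.πR A))
    {A A' : Fin Φ.k → B} (h : A = A') :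
    γ A = eqToHom (by rw [h]) ≫ γ A' ≫ eqToHom (by rw [h]) := by
  subst h; simp

theorem del_congr
    (G : (∀ j : Fin n, VarCat B (sy j)) ⥤ B) (H : (∀ l : Fin p, VarCat B (sz l)) ⥤ B)
    (δ : ∀ A : Fin Ψ.k → B, G.obj (diagObj sy Ψ.πL A) ⟶ H.obj (diagObj sz Ψ.πR A))
    {A A' : Fin Ψ.k → B} (h : A = A') :
    δ A = eqToHom (by rw [h]) ≫ δ A' ≫ eqToHom (by rw [h]) := by
  subst h; simp

end PartF

section PartG
variable {m n p gΦ gΨ : ℕ} {sx : Fin m → Bool} {sy : Fin n → Bool} {sz : Fin p → Bool}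
variable (Φ : GGraph m n gΦ sx sy) (Ψ : GGraph n p gΨ sy sz)
variable {B : Type u} [Category.{v} B]
variable (P Q : B) (f : P ⟶ Q)
variable (F : (∀ i : Fin m, VarCat B (sx i)) ⥤ B)
  (G : (∀ j : Fin n, VarCat B (sy j)) ⥤ B)
  (H : (∀ l : Fin p, VarCat B (sz l)) ⥤ B)
  (γ : ∀ A : Fin Φ.k → B, F.obj (diagObj sx Φ.πL A) ⟶ G.obj (diagObj sy Φ.πR A))
  (δ : ∀ A : Fin Ψ.k → B, G.obj (diagObj sy Ψ.πL A) ⟶ H.obj (diagObj sz Ψ.πR A))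

theorem step_phi (hγ : IsGDin Φ F G γ) (c : Fin Φ.k)
    (σ σ' : Fin Φ.k ⊕ Fin Ψ.k → Bool) (hσ : Compat Φ Ψ σ) (hσ' : Compat Φ Ψ σ')
    (hc : σ (.inl c) = true) (hc' : σ' (.inl c) = false)
    (hrest : ∀ u, u ≠ .inl c → σ' u = σ u) :
    Theta Φ Ψ P Q f F G H γ δ σ hσ = Theta Φ Ψ P Q f F G H γ δ σ' hσ' := by
  have hb : ∀ j, Φ.πR j = c → σ (.inr (Ψ.πL j)) = sy j := by
    intro j hj
    cases hs : sy j
    · have h2 := hσ' j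
      rw [hs] at h2
      simp only [Bool.cond_false] at h2
      rw [hj] at h2
      rw [← hrest (.inr (Ψ.πL j)) (by simp)]
      cases hh : σ' (.inr (Ψ.πL j))
      · rfl
      · exact absurd (h2 hh) (by rw [hc']; simp)
    · have h2 := hσ j
      rw [hs] at h2
      simp only [Bool.cond_true] at h2
      exact h2 (by rw [hj, hc])
  have hAG : AG Φ Ψ P Q σ' = AG Φ Ψ P Q σ := by
    funext d
    show val P Q (σ' (.inr d)) = val P Q (σ (.inr d))
    rw [hrest _ (by simp)]
  have hQup : updF (AF Φ Ψ P Q σ) c Q = AF Φ Ψ P Q σ :=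
    updF_self _ _ _ (by show val P Q _ = Q; rw [hc])
  have hPup : updF (AF Φ Ψ P Q σ) c P = AF Φ Ψ P Q σ' := by
    funext c'
    by_cases hh : c' = c
    · simp [updF, AF, hh, hc']
    · simp [updF, AF, hh, hrest (.inl c') (by simp [hh])]
  have hIns := hγ c (AF Φ Ψ P Q σ) P Q f
  rw [gam_congr Φ F G γ hQup, gam_congr Φ F G γ hPup] at hIns
  simp only [Category.assoc, eqToHom_trans, eqToHom_trans_assoc, eqToHom_refl,
    Category.id_comp, Category.comp_id] at hIns
  show F.map _ ≫ γ (AF Φ Ψ P Q σ) ≫ G.map _ ≫ δ (AG Φ Ψ P Q σ) ≫ H.map _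
    = F.map _ ≫ γ (AF Φ Ψ P Q σ') ≫ G.map _ ≫ δ (AG Φ Ψ P Q σ') ≫ H.map _
  rw [fact1 Φ Ψ P Q f σ c hc, fact3 Φ Ψ P Q f σ c hσ hb hc,
    fact2 Φ Ψ P Q f σ σ' c hc' hrest, fact4 Φ Ψ P Q f σ σ' c hσ hσ' hb hc' hrest hAG,
    fact5 Φ Ψ P Q f σ σ' c hrest hAG, del_congr Ψ G H δ hAG]
  simp only [Functor.map_comp, eqToHom_map, Category.assoc, eqToHom_trans,
    eqToHom_trans_assoc, eqToHom_refl, Category.id_comp, Category.comp_id]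
  rw [reassoc_of% hIns]

end PartG

section PartH
variable {m n p gΦ gΨ : ℕ} {sx : Fin m → Bool} {sy : Fin n → Bool} {sz : Fin p → Bool}
variable (Φ : GGraph m n gΦ sx sy) (Ψ : GGraph n p gΨ sy sz)
variable {B : Type u} [Category.{v} B]
variable (P Q : B) (f : P ⟶ Q)

/-- component-wise morphism from the Φ-diagonal into the Ψ-hexagon object -/
def w3m (σ : Fin Φ.k ⊕ Fin Ψ.k → Bool) (d : Fin Ψ.k) (hσ : Compat Φ Ψ σ)
    (hb : ∀ j, Ψ.πL j = d → σ (.inl (Φ.πR j)) = !(sy j)) :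
    (diagObj sy Φ.πR (AF Φ Ψ P Q σ) ⟶ hexObj sy Ψ.πL d (AG Φ Ψ P Q σ) P Q) :=
  fun j =>
    if h : Ψ.πL j = d then
      eqToHom (by rw [hexObj_pos sy Ψ.πL d (AG Φ Ψ P Q σ) P Q j h]
                  show pairObj (sy j) (val P Q (σ (.inl (Φ.πR j))))
                    (val P Q (σ (.inl (Φ.πR j)))) = _
                  rw [hb j h]; cases sy j <;> rfl)
    else midHom P Q f (sy j) (σ (.inl (Φ.πR j))) (σ (.inr (Ψ.πL j))) (hσ j) ≫
      eqToHom (hexObj_neg sy Ψ.πL d (AG Φ Ψ P Q σ) P Q j h).symm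

/-- component-wise morphism from the Ψ-hexagon object to the `⟨Q,P⟩`-tuple -/
def v2m (σ : Fin Φ.k ⊕ Fin Ψ.k → Bool) (d : Fin Ψ.k) :
    (hexObj sz Ψ.πR d (AG Φ Ψ P Q σ) Q P ⟶ tupObj sz Q P) :=
  fun l =>
    if h : Ψ.πR l = d then eqToHom (hexObj_pos sz Ψ.πR d (AG Φ Ψ P Q σ) Q P l h)
    else eqToHom (hexObj_neg sz Ψ.πR d (AG Φ Ψ P Q σ) Q P l h) ≫
      rightHom P Q f (sz l) (σ (.inr (Ψ.πR l)))

theorem psifact1 (σ σ' : Fin Φ.k ⊕ Fin Ψ.k → Bool) (d : Fin Ψ.k)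
    (hrest : ∀ u, u ≠ .inr d → σ' u = σ u) (hAF : AF Φ Ψ P Q σ' = AF Φ Ψ P Q σ) :
    uFm Φ Ψ P Q f σ' = uFm Φ Ψ P Q f σ ≫
      eqToHom (congrArg (diagObj sx Φ.πL) hAF.symm) := by
  funext i
  simp only [Pi.comp_apply, Functor.eqToHom_proj, uFm]
  refine eq_of_heq ?_
  simp only [Category.assoc, eqToHom_comp_heq_iff, comp_eqToHom_heq_iff,
    heq_eqToHom_comp_iff, heq_comp_eqToHom_iff]
  rw [hrest (.inl (Φ.πL i)) (by simp)]

theorem psifact3 (σ : Fin Φ.k ⊕ Fin Ψ.k → Bool) (d : Fin Ψ.k) (hσ : Compat Φ Ψ σ)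
    (hb : ∀ j, Ψ.πL j = d → σ (.inl (Φ.πR j)) = !(sy j)) (hc : σ (.inr d) = true) :
    wMid Φ Ψ P Q f σ hσ = w3m Φ Ψ P Q f σ d hσ hb ≫
      hexHom sy Ψ.πL d (AG Φ Ψ P Q σ) f (𝟙 Q) ≫
      eqToHom (hex_diag sy Ψ.πL d (AG Φ Ψ P Q σ) Q (by show val P Q _ = Q; rw [hc])) := by
  funext j
  simp only [Pi.comp_apply, Functor.eqToHom_proj, wMid, w3m]
  by_cases h : Ψ.πL j = d
  · rw [dif_pos h, hexHom_pos_eq sy Ψ.πL d (AG Φ Ψ P Q σ) f (𝟙 Q) j h]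
    refine eq_of_heq ?_
    simp only [Category.assoc, Functor.eqToHom_proj, eqToHom_comp_heq_iff, comp_eqToHom_heq_iff,
      heq_eqToHom_comp_iff, heq_comp_eqToHom_iff, eqToHom_trans, eqToHom_trans_assoc,
      eqToHom_refl, Category.comp_id, Category.id_comp]
    exact HEq.trans (midHom_congr P Q f (sy j) (hb j h)
      (show σ (.inr (Ψ.πL j)) = true by rw [h, hc]) (hσ j) (by cases sy j <;> simp))
      (midHom_c3' P Q f (sy j) _)
  · rw [dif_neg h, hexHom_neg_eq sy Ψ.πL d (AG Φ Ψ P Q σ) f (𝟙 Q) j h]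
    refine eq_of_heq ?_
    simp only [Category.assoc, Functor.eqToHom_proj, eqToHom_comp_heq_iff, comp_eqToHom_heq_iff,
      heq_eqToHom_comp_iff, heq_comp_eqToHom_iff, eqToHom_trans, eqToHom_trans_assoc,
      eqToHom_refl, Category.comp_id, Category.id_comp]
    exact HEq.rfl

theorem psifact4 (σ σ' : Fin Φ.k ⊕ Fin Ψ.k → Bool) (d : Fin Ψ.k)
    (hσ : Compat Φ Ψ σ) (hσ' : Compat Φ Ψ σ')
    (hb : ∀ j, Ψ.πL j = d → σ (.inl (Φ.πR j)) = !(sy j))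
    (hc' : σ' (.inr d) = false) (hrest : ∀ u, u ≠ .inr d → σ' u = σ u)
    (hAF : AF Φ Ψ P Q σ' = AF Φ Ψ P Q σ) :
    wMid Φ Ψ P Q f σ' hσ' = eqToHom (congrArg (diagObj sy Φ.πR) hAF) ≫
      w3m Φ Ψ P Q f σ d hσ hb ≫ hexHom sy Ψ.πL d (AG Φ Ψ P Q σ) (𝟙 P) f ≫
      eqToHom (hexPP_diag P Q sy Ψ.πL (fun x => σ (.inr x)) (fun x => σ' (.inr x)) d hc'
        (fun x hx => hrest _ (by simp [hx]))) := by
  funext j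
  simp only [Pi.comp_apply, Functor.eqToHom_proj, wMid, w3m]
  by_cases h : Ψ.πL j = d
  · rw [dif_pos h, hexHom_pos_eq sy Ψ.πL d (AG Φ Ψ P Q σ) (𝟙 P) f j h]
    refine eq_of_heq ?_
    simp only [Category.assoc, Functor.eqToHom_proj, eqToHom_comp_heq_iff, comp_eqToHom_heq_iff,
      heq_eqToHom_comp_iff, heq_comp_eqToHom_iff, eqToHom_trans, eqToHom_trans_assoc,
      eqToHom_refl, Category.comp_id, Category.id_comp]
    exact HEq.trans (midHom_congr P Q f (sy j)
      ((hrest _ (by simp)).trans (hb j h))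
      (show σ' (.inr (Ψ.πL j)) = false by rw [h, hc']) (hσ' j) (by cases sy j <;> simp))
      (midHom_c4' P Q f (sy j) _)
  · rw [dif_neg h, hexHom_neg_eq sy Ψ.πL d (AG Φ Ψ P Q σ) (𝟙 P) f j h]
    refine eq_of_heq ?_
    simp only [Category.assoc, Functor.eqToHom_proj, eqToHom_comp_heq_iff, comp_eqToHom_heq_iff,
      heq_eqToHom_comp_iff, heq_comp_eqToHom_iff, eqToHom_trans, eqToHom_trans_assoc,
      eqToHom_refl, Category.comp_id, Category.id_comp]
    exact midHom_congr P Q f (sy j) (hrest _ (by simp)) (hrest _ (by simp [h])) (hσ' j) (hσ j)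

theorem psifact5 (σ : Fin Φ.k ⊕ Fin Ψ.k → Bool) (d : Fin Ψ.k) (hc : σ (.inr d) = true) :
    vHm Φ Ψ P Q f σ =
      eqToHom (hex_diag sz Ψ.πR d (AG Φ Ψ P Q σ) Q (by show val P Q _ = Q; rw [hc])).symm ≫
      hexHom sz Ψ.πR d (AG Φ Ψ P Q σ) (𝟙 Q) f ≫ v2m Φ Ψ P Q f σ d := by
  funext l
  simp only [Pi.comp_apply, Functor.eqToHom_proj, vHm, v2m]
  by_cases h : Ψ.πR l = d
  · rw [dif_pos h, hexHom_pos_eq sz Ψ.πR d (AG Φ Ψ P Q σ) (𝟙 Q) f l h]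
    refine eq_of_heq ?_
    simp only [Category.assoc, Functor.eqToHom_proj, eqToHom_comp_heq_iff, comp_eqToHom_heq_iff,
      heq_eqToHom_comp_iff, heq_comp_eqToHom_iff, eqToHom_trans, eqToHom_trans_assoc,
      eqToHom_refl, Category.comp_id, Category.id_comp]
    rw [show σ (.inr (Ψ.πR l)) = true by rw [h, hc]]
    exact heq_of_eq (rightHom_true P Q f (sz l))
  · rw [dif_neg h, hexHom_neg_eq sz Ψ.πR d (AG Φ Ψ P Q σ) (𝟙 Q) f l h]
    refine eq_of_heq ?_
    simp only [Category.assoc, Functor.eqToHom_proj, eqToHom_comp_heq_iff, comp_eqToHom_heq_iff,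
      heq_eqToHom_comp_iff, heq_comp_eqToHom_iff, eqToHom_trans, eqToHom_trans_assoc,
      eqToHom_refl, Category.comp_id, Category.id_comp]
    exact HEq.rfl

theorem psifact6 (σ σ' : Fin Φ.k ⊕ Fin Ψ.k → Bool) (d : Fin Ψ.k)
    (hc' : σ' (.inr d) = false) (hrest : ∀ u, u ≠ .inr d → σ' u = σ u) :
    vHm Φ Ψ P Q f σ' =
      eqToHom (hexPP_diag P Q sz Ψ.πR (fun x => σ (.inr x)) (fun x => σ' (.inr x)) d hc'
        (fun x hx => hrest _ (by simp [hx]))).symm ≫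
      hexHom sz Ψ.πR d (AG Φ Ψ P Q σ) f (𝟙 P) ≫ v2m Φ Ψ P Q f σ d := by
  funext l
  simp only [Pi.comp_apply, Functor.eqToHom_proj, vHm, v2m]
  by_cases h : Ψ.πR l = d
  · rw [dif_pos h, hexHom_pos_eq sz Ψ.πR d (AG Φ Ψ P Q σ) f (𝟙 P) l h]
    refine eq_of_heq ?_
    simp only [Category.assoc, Functor.eqToHom_proj, eqToHom_comp_heq_iff, comp_eqToHom_heq_iff,
      heq_eqToHom_comp_iff, heq_comp_eqToHom_iff, eqToHom_trans, eqToHom_trans_assoc,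
      eqToHom_refl, Category.comp_id, Category.id_comp]
    rw [show σ' (.inr (Ψ.πR l)) = false by rw [h, hc']]
    exact heq_of_eq (rightHom_false P Q f (sz l))
  · rw [dif_neg h, hexHom_neg_eq sz Ψ.πR d (AG Φ Ψ P Q σ) f (𝟙 P) l h]
    refine eq_of_heq ?_
    simp only [Category.assoc, Functor.eqToHom_proj, eqToHom_comp_heq_iff, comp_eqToHom_heq_iff,
      heq_eqToHom_comp_iff, heq_comp_eqToHom_iff, eqToHom_trans, eqToHom_trans_assoc,
      eqToHom_refl, Category.comp_id, Category.id_comp]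
    rw [hrest (.inr (Ψ.πR l)) (by simp [h])]

variable (F : (∀ i : Fin m, VarCat B (sx i)) ⥤ B)
  (G : (∀ j : Fin n, VarCat B (sy j)) ⥤ B)
  (H : (∀ l : Fin p, VarCat B (sz l)) ⥤ B)
  (γ : ∀ A : Fin Φ.k → B, F.obj (diagObj sx Φ.πL A) ⟶ G.obj (diagObj sy Φ.πR A))
  (δ : ∀ A : Fin Ψ.k → B, G.obj (diagObj sy Ψ.πL A) ⟶ H.obj (diagObj sz Ψ.πR A))

theorem step_psi (hδ : IsGDin Ψ G H δ) (d : Fin Ψ.k)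
    (σ σ' : Fin Φ.k ⊕ Fin Ψ.k → Bool) (hσ : Compat Φ Ψ σ) (hσ' : Compat Φ Ψ σ')
    (hc : σ (.inr d) = true) (hc' : σ' (.inr d) = false)
    (hrest : ∀ u, u ≠ .inr d → σ' u = σ u) :
    Theta Φ Ψ P Q f F G H γ δ σ hσ = Theta Φ Ψ P Q f F G H γ δ σ' hσ' := by
  have hb : ∀ j, Ψ.πL j = d → σ (.inl (Φ.πR j)) = !(sy j) := by
    intro j hj
    cases hs : sy j
    · have h2 := hσ j
      rw [hs] at h2
      simp only [Bool.cond_false] at h2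
      exact h2 (by rw [hj, hc])
    · have h2 := hσ' j
      rw [hs] at h2
      simp only [Bool.cond_true] at h2
      rw [hj] at h2
      rw [← hrest (.inl (Φ.πR j)) (by simp)]
      cases hh : σ' (.inl (Φ.πR j))
      · rfl
      · exact absurd (h2 hh) (by rw [hc']; simp)
  have hAF : AF Φ Ψ P Q σ' = AF Φ Ψ P Q σ := by
    funext c
    show val P Q (σ' (.inl c)) = val P Q (σ (.inl c))
    rw [hrest _ (by simp)]
  have hQup : updF (AG Φ Ψ P Q σ) d Q = AG Φ Ψ P Q σ :=
    updF_self _ _ _ (by show val P Q _ = Q; rw [hc])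
  have hPup : updF (AG Φ Ψ P Q σ) d P = AG Φ Ψ P Q σ' := by
    funext d'
    by_cases hh : d' = d
    · simp [updF, AG, hh, hc']
    · simp [updF, AG, hh, hrest (.inr d') (by simp [hh])]
  have hIns := hδ d (AG Φ Ψ P Q σ) P Q f
  rw [del_congr Ψ G H δ hQup, del_congr Ψ G H δ hPup] at hIns
  simp only [Category.assoc, eqToHom_trans, eqToHom_trans_assoc, eqToHom_refl,
    Category.id_comp, Category.comp_id] at hIns
  show F.map _ ≫ γ (AF Φ Ψ P Q σ) ≫ G.map _ ≫ δ (AG Φ Ψ P Q σ) ≫ H.map _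
    = F.map _ ≫ γ (AF Φ Ψ P Q σ') ≫ G.map _ ≫ δ (AG Φ Ψ P Q σ') ≫ H.map _
  rw [psifact3 Φ Ψ P Q f σ d hσ hb hc, psifact5 Φ Ψ P Q f σ d hc,
    psifact1 Φ Ψ P Q f σ σ' d hrest hAF, gam_congr Φ F G γ hAF,
    psifact4 Φ Ψ P Q f σ σ' d hσ hσ' hb hc' hrest hAF,
    psifact6 Φ Ψ P Q f σ σ' d hc' hrest]
  simp only [Functor.map_comp, eqToHom_map, Category.assoc, eqToHom_trans,
    eqToHom_trans_assoc, eqToHom_refl, Category.id_comp, Category.comp_id]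
  rw [reassoc_of% hIns]

end PartH

section PartI
variable {m n p gΦ gΨ : ℕ} {sx : Fin m → Bool} {sy : Fin n → Bool} {sz : Fin p → Bool}
variable (Φ : GGraph m n gΦ sx sy) (Ψ : GGraph n p gΨ sy sz)

/-- one "precedence" step between components, witnessed by the argument place `j` -/
def StepW (j : Fin n) (u v : Fin Φ.k ⊕ Fin Ψ.k) : Prop :=
  (sy j = true ∧ u = .inl (Φ.πR j) ∧ v = .inr (Ψ.πL j)) ∨
  (sy j = false ∧ u = .inr (Ψ.πL j) ∧ v = .inl (Φ.πR j))

/-- the precedence relation between components of `Φ` and of `Ψ` -/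
def StRel (u v : Fin Φ.k ⊕ Fin Ψ.k) : Prop := ∃ j : Fin n, StepW Φ Ψ j u v

theorem stepW_sides {j : Fin n} {u v : Fin Φ.k ⊕ Fin Ψ.k} (h : StepW Φ Ψ j u v) :
    u.isLeft = !v.isLeft := by
  rcases h with ⟨_, hu, hv⟩ | ⟨_, hu, hv⟩ <;> subst hu <;> subst hv <;> rfl

theorem transGen_chain {α : Type*} {r : α → α → Prop} {a b : α}
    (h : Relation.TransGen r a b) :
    ∃ (k : ℕ) (us : ℕ → α), 0 < k ∧ us 0 = a ∧ us k = b ∧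
      ∀ t, t < k → r (us t) (us (t + 1)) := by
  induction h with
  | @single b' hr =>
    refine ⟨1, fun t => if t = 0 then a else b', Nat.one_pos, by simp, by simp, ?_⟩
    intro t ht
    have ht0 : t = 0 := by omega
    subst ht0
    simpa using hr
  | @tail b' c hab hbc ih =>
    obtain ⟨k, us, hk, h0, hkb, hstep⟩ := ih
    refine ⟨k + 1, fun t => if t ≤ k then us t else c, by omega, ?_, ?_, ?_⟩
    · simp [Nat.zero_le, h0]
    · simp
    · intro t ht
      show r (if t ≤ k then us t else c) (if t + 1 ≤ k then us (t + 1) else c)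
      by_cases h1 : t + 1 ≤ k
      · rw [if_pos (by omega), if_pos h1]
        exact hstep t (by omega)
      · have ht' : t = k := by omega
        subst ht'
        rw [if_pos (le_refl _), if_neg h1, hkb]
        exact hbc

theorem no_cycle (hL : ¬ HasAltLoop Φ Ψ) (u : Fin Φ.k ⊕ Fin Ψ.k) :
    ¬ Relation.TransGen (StRel Φ Ψ) u u := by
  intro hcyc
  classical
  obtain ⟨k, us, hk, h0, hkb, hstep⟩ := transGen_chain hcyc
  choose js hjs using hstep
  apply hL
  refine ⟨k, fun t => .inl (.inr (.inl (js (t % k) (Nat.mod_lt _ hk)))),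
    fun t => (us ((t % k) + 1)).isLeft, hk, by simp [Nat.mod_self, Nat.zero_mod], ?_, ?_⟩
  · -- edges
    intro t ht
    have hmt : t % k = t := Nat.mod_eq_of_lt ht
    have hus : us ((t + 1) % k) = us (t + 1) := by
      by_cases h1 : t + 1 < k
      · rw [Nat.mod_eq_of_lt h1]
      · have h2 : t + 1 = k := by omega
        rw [h2, Nat.mod_self, h0, hkb]
    simp only [hmt]
    have hw₁ : StepW Φ Ψ (js t ht) (us t) (us (t + 1)) := hjs t ht
    have hw₂ : StepW Φ Ψ (js ((t + 1) % k) (Nat.mod_lt _ hk))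
        (us ((t + 1) % k)) (us ((t + 1) % k + 1)) := hjs _ _
    rw [hus] at hw₂
    set j₂ := js ((t + 1) % k) (Nat.mod_lt _ hk) with hj₂
    cases hmid : us (t + 1) with
    | inl c =>
      rw [hmid] at hw₁ hw₂
      rcases hw₁ with ⟨_, _, hv⟩ | ⟨hs1, _, hv⟩
      · exact absurd hv (by simp)
      · rcases hw₂ with ⟨hs2, hu2, _⟩ | ⟨_, hu2, _⟩
        · have hc1 : Φ.πR (js t ht) = c := (Sum.inl_injective hv).symm
          have hc2 : Φ.πR j₂ = c := (Sum.inl_injective hu2).symm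
          have hedge : Φ.edge (.inl (.inr (js t ht))) (.inl (.inr j₂)) := by
            refine (Φ.condY (js t ht) j₂).2 ⟨by rw [hs1, hs2]; rfl, (Φ.π_eq _ _).1 ?_⟩
            show Φ.πR (js t ht) = Φ.πR j₂
            rw [hc1, hc2]
          show amEdge Φ Ψ (Sum.inl c).isLeft _ _
          exact ⟨.inl (.inr (js t ht)), .inl (.inr j₂), hedge, rfl, rfl⟩
        · exact absurd hu2 (by simp)
    | inr d =>
      rw [hmid] at hw₁ hw₂
      rcases hw₁ with ⟨hs1, _, hv⟩ | ⟨_, _, hv⟩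
      · rcases hw₂ with ⟨_, hu2, _⟩ | ⟨hs2, hu2, _⟩
        · exact absurd hu2 (by simp)
        · have hd1 : Ψ.πL (js t ht) = d := (Sum.inr_injective hv).symm
          have hd2 : Ψ.πL j₂ = d := (Sum.inr_injective hu2).symm
          have hedge : Ψ.edge (.inl (.inl (js t ht))) (.inl (.inl j₂)) := by
            refine (Ψ.condX (js t ht) j₂).2 ⟨by rw [hs1, hs2]; rfl, (Ψ.π_eq _ _).1 ?_⟩
            show Ψ.πL (js t ht) = Ψ.πL j₂
            rw [hd1, hd2]
          show amEdge Φ Ψ (Sum.inr d).isLeft _ _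
          exact ⟨.inl (.inl (js t ht)), .inl (.inl j₂), hedge, rfl, rfl⟩
      · exact absurd hv (by simp)
  · -- alternation
    intro t ht
    have hm1 : t % k = t := Nat.mod_eq_of_lt (by omega)
    have hm2 : (t + 1) % k = t + 1 := Nat.mod_eq_of_lt ht
    have hflip := stepW_sides Φ Ψ (hjs (t + 1) ht)
    show (us (t % k + 1)).isLeft ≠ (us ((t + 1) % k + 1)).isLeft
    rw [hm1, hm2, hflip]
    exact Bool.not_ne_self _

noncomputable def stRank (u : Fin Φ.k ⊕ Fin Ψ.k) : ℕ :=
  Set.ncard {w | Relation.TransGen (StRel Φ Ψ) w u}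

theorem stRank_lt (hL : ¬ HasAltLoop Φ Ψ) {u v : Fin Φ.k ⊕ Fin Ψ.k}
    (huv : StRel Φ Ψ u v) : stRank Φ Ψ u < stRank Φ Ψ v := by
  apply Set.ncard_lt_ncard _ (Set.toFinite _)
  constructor
  · intro w hw
    exact hw.tail huv
  · intro hsub
    exact no_cycle Φ Ψ hL u (hsub (Relation.TransGen.single huv))

noncomputable def stPos (u : Fin Φ.k ⊕ Fin Ψ.k) : ℕ :=
  (Fintype.card (Fin Φ.k ⊕ Fin Ψ.k) + 1) * stRank Φ Ψ u +
    ((Fintype.equivFin (Fin Φ.k ⊕ Fin Ψ.k)) u : ℕ)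

theorem stRank_le (u : Fin Φ.k ⊕ Fin Ψ.k) :
    stRank Φ Ψ u ≤ Fintype.card (Fin Φ.k ⊕ Fin Ψ.k) := by
  have h := Set.ncard_le_ncard
    (Set.subset_univ {w | Relation.TransGen (StRel Φ Ψ) w u}) Set.finite_univ
  rwa [Set.ncard_univ, Nat.card_eq_fintype_card] at h

theorem stPos_lt (hL : ¬ HasAltLoop Φ Ψ) {u v : Fin Φ.k ⊕ Fin Ψ.k}
    (huv : StRel Φ Ψ u v) : stPos Φ Ψ u < stPos Φ Ψ v := by
  have h1 := stRank_lt Φ Ψ hL huv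
  have h2 : ((Fintype.equivFin (Fin Φ.k ⊕ Fin Ψ.k)) u : ℕ) <
      Fintype.card (Fin Φ.k ⊕ Fin Ψ.k) := Fin.is_lt _
  unfold stPos
  set N := Fintype.card (Fin Φ.k ⊕ Fin Ψ.k)
  calc (N + 1) * stRank Φ Ψ u + _ < (N + 1) * stRank Φ Ψ u + (N + 1) := by omega
  _ = (N + 1) * (stRank Φ Ψ u + 1) := by ring
  _ ≤ (N + 1) * stRank Φ Ψ v := Nat.mul_le_mul_left _ (by omega)
  _ ≤ (N + 1) * stRank Φ Ψ v + _ := Nat.le_add_right _ _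

theorem stPos_inj {u v : Fin Φ.k ⊕ Fin Ψ.k} (h : stPos Φ Ψ u = stPos Φ Ψ v) : u = v := by
  unfold stPos at h
  set N := Fintype.card (Fin Φ.k ⊕ Fin Ψ.k) with hN
  have hu : ((Fintype.equivFin (Fin Φ.k ⊕ Fin Ψ.k)) u : ℕ) < N + 1 :=
    Nat.lt_succ_of_lt (Fin.is_lt _)
  have hv : ((Fintype.equivFin (Fin Φ.k ⊕ Fin Ψ.k)) v : ℕ) < N + 1 :=
    Nat.lt_succ_of_lt (Fin.is_lt _)
  have heq : ((Fintype.equivFin (Fin Φ.k ⊕ Fin Ψ.k)) u : ℕ) =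
      ((Fintype.equivFin (Fin Φ.k ⊕ Fin Ψ.k)) v : ℕ) := by
    have h2 := congrArg (· % (N + 1)) h
    simp only [← hN, Nat.mul_add_mod] at h2
    rwa [Nat.mod_eq_of_lt hu, Nat.mod_eq_of_lt hv] at h2
  have := (Fintype.equivFin (Fin Φ.k ⊕ Fin Ψ.k)).injective (Fin.ext heq)
  exact this

theorem stPos_bound (u : Fin Φ.k ⊕ Fin Ψ.k) :
    stPos Φ Ψ u < (Fintype.card (Fin Φ.k ⊕ Fin Ψ.k) + 1) *
      (Fintype.card (Fin Φ.k ⊕ Fin Ψ.k) + 1) := by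
  have h1 := stRank_le Φ Ψ u
  have h2 : ((Fintype.equivFin (Fin Φ.k ⊕ Fin Ψ.k)) u : ℕ) <
      Fintype.card (Fin Φ.k ⊕ Fin Ψ.k) := Fin.is_lt _
  unfold stPos
  set N := Fintype.card (Fin Φ.k ⊕ Fin Ψ.k)
  calc (N + 1) * stRank Φ Ψ u + _ < (N + 1) * N + (N + 1) := by
        have : (N + 1) * stRank Φ Ψ u ≤ (N + 1) * N := Nat.mul_le_mul_left _ h1
        omega
  _ = (N + 1) * (N + 1) := by ring

end PartI

/-- Lemma 2.10 of the paper.  If there are no alternating loops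
in the single-component amalgamation `Φ+Ψ`, then `Φ+Ψ` provides g-dinaturality
(i.e. `P(Φ,Ψ)` holds). -/
theorem no_altLoop_provides
    {m n p gΦ gΨ : ℕ} {sx : Fin m → Bool} {sy : Fin n → Bool} {sz : Fin p → Bool}
    (Φ : GGraph m n gΦ sx sy) (Ψ : GGraph n p gΨ sy sz)
    (hconn : AmalgConnected Φ Ψ) (hL : ¬ HasAltLoop Φ Ψ) :
    Provides.{u, v} Φ Ψ := by
  intro B _ F G H γ δ hγ hδ
  intro P Q f
  classical
  set σt : ℕ → Fin Φ.k ⊕ Fin Ψ.k → Bool :=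
    fun t u => decide (t ≤ stPos Φ Ψ u) with hσt
  have hcomp : ∀ t, Compat Φ Ψ (σt t) := by
    intro t j
    cases hs : sy j <;>
      simp only [hs, Bool.cond_false, Bool.cond_true, hσt, decide_eq_true_eq] <;>
      intro h1
    · exact le_trans h1 (le_of_lt (stPos_lt Φ Ψ hL ⟨j, Or.inr ⟨hs, rfl, rfl⟩⟩))
    · exact le_trans h1 (le_of_lt (stPos_lt Φ Ψ hL ⟨j, Or.inl ⟨hs, rfl, rfl⟩⟩))
  have key : ∀ t, Theta Φ Ψ P Q f F G H γ δ (σt 0) (hcomp 0)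
      = Theta Φ Ψ P Q f F G H γ δ (σt t) (hcomp t) := by
    intro t
    induction t with
    | zero => rfl
    | succ t ih =>
      refine ih.trans ?_
      by_cases hexu : ∃ u, stPos Φ Ψ u = t
      · obtain ⟨u, hu⟩ := hexu
        have hc : σt t u = true := by simp [hσt, hu]
        have hc' : σt (t + 1) u = false := by simp [hσt, hu]
        have hrest : ∀ u', u' ≠ u → σt (t + 1) u' = σt t u' := by
          intro u' hne
          have hne' : stPos Φ Ψ u' ≠ t := fun hh => hne (stPos_inj Φ Ψ (hh.trans hu.symm))
          simp only [hσt, decide_eq_decide]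
          omega
        cases u with
        | inl c =>
          exact step_phi Φ Ψ P Q f F G H γ δ hγ c (σt t) (σt (t + 1))
            (hcomp t) (hcomp (t + 1)) hc hc' hrest
        | inr d =>
          exact step_psi Φ Ψ P Q f F G H γ δ hδ d (σt t) (σt (t + 1))
            (hcomp t) (hcomp (t + 1)) hc hc' hrest
      · have hfun : σt t = σt (t + 1) := by
          funext u'
          have hne' : stPos Φ Ψ u' ≠ t := fun hh => hexu ⟨u', hh⟩
          simp only [hσt, decide_eq_decide]
          omega
        exact theta_congr Φ Ψ P Q f F G H γ δ hfun (hcomp t) (hcomp (t + 1))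
  set T : ℕ := (Fintype.card (Fin Φ.k ⊕ Fin Ψ.k) + 1) *
    (Fintype.card (Fin Φ.k ⊕ Fin Ψ.k) + 1) with hT
  have h0 : (fun _ => true) = σt 0 := by
    funext u'
    simp [hσt]
  have hend : σt T = fun _ => false := by
    funext u'
    simp only [hσt, decide_eq_false_iff_not]
    exact fun hh => absurd (stPos_bound Φ Ψ u') (by omega)
  have e1 : Theta Φ Ψ P Q f F G H γ δ (fun _ => true) (compat_const Φ Ψ true)
      = Theta Φ Ψ P Q f F G H γ δ (σt 0) (hcomp 0) :=
    theta_congr Φ Ψ P Q f F G H γ δ h0 _ _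
  have e3 : Theta Φ Ψ P Q f F G H γ δ (σt T) (hcomp T)
      = Theta Φ Ψ P Q f F G H γ δ (fun _ => false) (compat_const Φ Ψ false) :=
    theta_congr Φ Ψ P Q f F G H γ δ hend _ _
  have main := (e1.trans ((key T).trans e3))
  rw [theta_top Φ Ψ P Q f F G H γ δ, theta_bot Φ Ψ P Q f F G H γ δ] at main
  exact main
end GDin
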